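/- arXiv:1607.01058 — 2 statements merged into one kernel-verified Lean document; each statement's English description precedes it below -/
import Mathlib

section
/- Let $N_p \subseteq \mathbb{C}^{d_p}$ and $N_q \subseteq \mathbb{C}^{d_q}$ be subspaces of dimensions $e_p$ and $e_q$ with Plücker coordinates $(\Delta_{I'})$ and $(\Delta_{J'})$, and let $A = (m_{j,i})$ be a $d_q \times d_p$ complex matrix. If for every $(e_p-1)$-subset $I$ of $\{1,\dots,d_p\}$ and every $(e_q+1)$-subset $J$ of $\{1,\dots,d_q\}$ the relation $\sum_{i \notin I,\, j \in J} (-1)^{\epsilon(i,I)+\epsilon(j,J)} m_{j,i} \Delta_{I\cup\{i\}} \Delta_{J\setminus\{j\}} = 0$ holds, then $A(N_p) \subseteq N_q$. -/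
open Matrix Finset

def eps {d : ℕ} (i : Fin d) (I : Finset (Fin d)) : ℕ := (I.filter fun i' => i' ≤ i).card

noncomputable def plucker {d e : ℕ} (B : Matrix (Fin d) (Fin e) ℂ) (I : Finset (Fin d)) : ℂ :=
  if h : I.card = e then (B.submatrix (fun k => (I.orderIsoOfFin h k : Fin d)) id).det else 0

lemma plucker_eq {d e : ℕ} (B : Matrix (Fin d) (Fin e) ℂ) {I : Finset (Fin d)} (h : I.card = e) :
    plucker B I = (B.submatrix (I.orderEmbOfFin h) id).det := by
  rw [plucker, dif_pos h]; rfl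

lemma plucker_eq_zero {d e : ℕ} (B : Matrix (Fin d) (Fin e) ℂ) {I : Finset (Fin d)}
    (h : I.card ≠ e) : plucker B I = 0 := by
  rw [plucker, dif_neg h]

lemma eps_orderEmbOfFin {d m : ℕ} (J : Finset (Fin d)) (hJ : J.card = m) (k : Fin m) :
    eps (J.orderEmbOfFin hJ k) J = (k : ℕ) + 1 := by
  classical
  set f := J.orderEmbOfFin hJ with hf
  have hrange : Set.range f = (J : Set (Fin d)) := J.range_orderEmbOfFin hJ
  have : J.filter (fun j => j ≤ f k) = (Finset.Iic k).image f := by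
    ext j
    simp only [mem_filter, mem_image, mem_Iic]
    constructor
    · rintro ⟨hjJ, hle⟩
      obtain ⟨k', rfl⟩ : ∃ k', f k' = j := by
        have : j ∈ Set.range f := hrange ▸ (by exact_mod_cast hjJ)
        exact this
      exact ⟨k', f.le_iff_le.mp hle, rfl⟩
    · rintro ⟨k', hk', rfl⟩
      exact ⟨J.orderEmbOfFin_mem hJ k', f.monotone hk'⟩
  rw [eps, this, Finset.card_image_of_injective _ f.injective, Fin.card_Iic]

lemma orderEmbOfFin_erase {d m : ℕ} (J : Finset (Fin d)) (hJ : J.card = m + 1) (k : Fin (m + 1))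
    (h' : (J.erase (J.orderEmbOfFin hJ k)).card = m) :
    ∀ x : Fin m, (J.erase (J.orderEmbOfFin hJ k)).orderEmbOfFin h' x
      = J.orderEmbOfFin hJ (k.succAbove x) := by
  set f := J.orderEmbOfFin hJ
  have h1 : ∀ x : Fin m, f (k.succAbove x) ∈ J.erase (f k) := by
    intro x
    exact Finset.mem_erase.2 ⟨fun h => (k.succAbove_ne x) (f.injective h),
      J.orderEmbOfFin_mem hJ _⟩
  have h2 : StrictMono (fun x : Fin m => f (k.succAbove x)) :=
    f.strictMono.comp (Fin.strictMono_succAbove k)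
  have := Finset.orderEmbOfFin_unique h' h1 h2
  intro x
  exact (congrFun this x).symm


lemma exists_plucker_ne_zero {d e : ℕ} (M : Matrix (Fin d) (Fin e) ℂ)
    (hM : LinearIndependent ℂ (fun l => fun i => M i l)) :
    ∃ J : Finset (Fin d), J.card = e ∧ plucker M J ≠ 0 := by
  classical
  -- the rows of M span (Fin e → ℂ)
  have hcols : (fun l => fun i => M i l) = Mᵀ := rfl
  have hrank : M.rank = e := by
    rw [Matrix.rank_eq_finrank_span_cols, Matrix.col, ← hcols, finrank_span_eq_card hM, Fintype.card_fin]
  have hrowspan : Submodule.span ℂ (Set.range (fun i => M i)) = ⊤ := by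
    apply Submodule.eq_top_of_finrank_eq
    have : Mᵀ.rank = e := by rw [Matrix.rank_transpose, hrank]
    rw [Matrix.rank_eq_finrank_span_cols, Matrix.col, Matrix.transpose_transpose] at this
    rw [show (Set.range fun i => M i) = Set.range M from rfl, this,
      Module.finrank_pi]
    simp
  -- extract an independent spanning subset of the rows
  obtain ⟨t, hts, hspan, hti⟩ := exists_linearIndependent ℂ (Set.range (fun i => M i))
  rw [hrowspan] at hspan
  have htfin : t.Finite := hti.setFinite
  haveI : Fintype t := htfin.fintype
  have htcard : htfin.toFinset.card = e := by
    have h1 : Module.finrank ℂ (Submodule.span ℂ t) = htfin.toFinset.card := by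
      rw [finrank_span_set_eq_card hti]
      simp
    rw [hspan] at h1
    rw [← h1]
    simp [Module.finrank_pi]
  -- choose row indices for elements of t, injectively
  have hch : ∀ v ∈ t, ∃ i, M i = v := fun v hv => hts hv
  choose g hg using hch
  set s : Finset (Fin d) := htfin.toFinset.attach.image
    (fun v => g v.1 (htfin.mem_toFinset.1 v.2)) with hs
  have hginj : ∀ v₁ (h₁ : v₁ ∈ t) v₂ (h₂ : v₂ ∈ t), g v₁ h₁ = g v₂ h₂ → v₁ = v₂ := by
    intro v₁ h₁ v₂ h₂ h
    rw [← hg v₁ h₁, ← hg v₂ h₂, h]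
  have hscard : s.card = e := by
    rw [hs, Finset.card_image_of_injective, Finset.card_attach, htcard]
    intro a b hab
    exact Subtype.ext (hginj _ _ _ _ hab)
  -- rows indexed by s lie in t and the assignment is injective
  have hMs : ∀ i ∈ s, M i ∈ t := by
    intro i hi
    rw [hs] at hi
    obtain ⟨v, _, rfl⟩ := Finset.mem_image.1 hi
    rw [hg]
    exact htfin.mem_toFinset.1 v.2
  have hMinj : ∀ i ∈ s, ∀ j ∈ s, M i = M j → i = j := by
    intro i hi j hj hij
    rw [hs] at hi hj
    obtain ⟨v, _, rfl⟩ := Finset.mem_image.1 hi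
    obtain ⟨w, _, rfl⟩ := Finset.mem_image.1 hj
    rw [hg, hg] at hij
    cases Subtype.ext hij
    rfl
  refine ⟨s, hscard, ?_⟩
  rw [plucker_eq M hscard]
  set f := s.orderEmbOfFin hscard
  have hrows : LinearIndependent ℂ (fun k => (M.submatrix f id) k) := by
    have : (fun k => (M.submatrix f id) k) = (fun v : t => (v : Fin e → ℂ)) ∘
        (fun k => (⟨M (f k), hMs _ (s.orderEmbOfFin_mem hscard k)⟩ : t)) := rfl
    rw [this]
    apply hti.comp
    intro a b hab
    have := congrArg Subtype.val hab
    exact f.injective (hMinj _ (s.orderEmbOfFin_mem hscard a) _ (s.orderEmbOfFin_mem hscard b) this)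
  have := Matrix.linearIndependent_rows_iff_isUnit.1 hrows
  intro h0
  exact ((Matrix.isUnit_iff_isUnit_det _).1 this).ne_zero h0
lemma neg_one_pow_mul_self (n : ℕ) : ((-1 : ℂ)) ^ n * (-1) ^ n = 1 := by
  rw [← pow_add, ← two_mul, pow_mul]
  norm_num

lemma eps_insert {d : ℕ} {i : Fin d} {I : Finset (Fin d)} (hiI : i ∉ I) :
    eps i (insert i I) = eps i I + 1 := by
  classical
  unfold eps
  rw [Finset.filter_insert, if_pos le_rfl, Finset.card_insert_of_notMem]
  intro h
  exact hiI (Finset.mem_of_mem_filter _ h)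

/-- the vector with coordinates `(-1)^(eps i I) * Δ_{I ∪ {i}}`. -/
noncomputable def vvec {d e : ℕ} (B : Matrix (Fin d) (Fin e) ℂ) (I : Finset (Fin d)) :
    Fin d → ℂ :=
  fun i => (-1 : ℂ) ^ (eps i I) * plucker B (insert i I)

lemma vvec_eq_mulVec {d m : ℕ} (B : Matrix (Fin d) (Fin (m + 1)) ℂ) (I : Finset (Fin d))
    (hI : I.card = m) :
    vvec B I = B.mulVec (fun l =>
      (-1 : ℂ) ^ (l : ℕ) * (B.submatrix (I.orderEmbOfFin hI) l.succAbove).det) := by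
  classical
  funext i
  set K : Fin (m + 1) → ℂ := fun l => (B.submatrix (I.orderEmbOfFin hI) l.succAbove).det with hK
  have hmv : B.mulVec (fun l => (-1 : ℂ) ^ (l : ℕ) * K l) i
      = ∑ l, B i l * ((-1 : ℂ) ^ (l : ℕ) * K l) := by
    simp [Matrix.mulVec, dotProduct]
  rw [hmv]
  set g := I.orderEmbOfFin hI with hg
  by_cases hiI : i ∈ I
  · -- both sides are zero
    have hL : vvec B I i = 0 := by
      rw [vvec, Finset.insert_eq_self.2 hiI, plucker_eq_zero]
      · ring
      · rw [hI]; omega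
    rw [hL]
    -- use the matrix with rows of `I` and an extra copy of row `i` at the end
    set D : Matrix (Fin (m + 1)) (Fin (m + 1)) ℂ := B.submatrix (Fin.snoc g i) id with hD
    obtain ⟨a, ha⟩ : ∃ a, g a = i := by
      have : i ∈ Set.range g := (I.range_orderEmbOfFin hI) ▸ (by exact_mod_cast hiI)
      exact this
    have hdup : D.det = 0 := by
      apply Matrix.det_zero_of_row_eq (i := Fin.castSucc a) (j := Fin.last m)
      · exact (Fin.castSucc_lt_last a).ne
      · funext b
        simp [hD, Matrix.submatrix_apply, Fin.snoc_castSucc, Fin.snoc_last, ha]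
    have hexp := Matrix.det_succ_row D (Fin.last m)
    rw [hdup] at hexp
    have hterm : ∀ l : Fin (m + 1),
        ((-1 : ℂ)) ^ ((Fin.last m : ℕ) + (l : ℕ)) * D (Fin.last m) l *
          (D.submatrix (Fin.last m).succAbove l.succAbove).det
        = (-1 : ℂ) ^ ((m : ℕ) + (l : ℕ)) * B i l * K l := by
      intro l
      have h1 : D (Fin.last m) l = B i l := by simp [hD, Fin.snoc_last]
      have h2 : D.submatrix (Fin.last m).succAbove l.succAbove
          = B.submatrix g l.succAbove := by
        ext a' b'
        simp [hD, Fin.succAbove_last, Fin.snoc_castSucc]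
      rw [h1, h2, Fin.val_last]
    rw [Finset.sum_congr rfl (fun l _ => hterm l)] at hexp
    have h3 : ∀ l : Fin (m + 1), B i l * ((-1 : ℂ) ^ (l : ℕ) * K l)
        = (-1 : ℂ) ^ m * ((-1 : ℂ) ^ ((m : ℕ) + (l : ℕ)) * B i l * K l) := by
      intro l
      have h4 := neg_one_pow_mul_self m
      rw [pow_add]
      calc B i l * ((-1 : ℂ) ^ (l : ℕ) * K l)
          = ((-1 : ℂ) ^ m * (-1) ^ m) * (B i l * ((-1 : ℂ) ^ (l : ℕ) * K l)) := by
            rw [h4, one_mul]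
        _ = (-1 : ℂ) ^ m * ((-1 : ℂ) ^ m * (-1 : ℂ) ^ (l : ℕ) * B i l * K l) := by ring
    have h5 : ∑ l : Fin (m + 1), B i l * ((-1 : ℂ) ^ (l : ℕ) * K l)
        = (-1 : ℂ) ^ m * ∑ l : Fin (m + 1), (-1 : ℂ) ^ ((m : ℕ) + (l : ℕ)) * B i l * K l := by
      rw [Finset.mul_sum]
      exact Finset.sum_congr rfl fun l _ => h3 l
    rw [h5, ← hexp, mul_zero]
  · -- i ∉ I
    have hcard : (insert i I).card = m + 1 := by
      rw [Finset.card_insert_of_notMem hiI, hI]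
    set f' := (insert i I).orderEmbOfFin hcard with hf'
    obtain ⟨p, hp⟩ : ∃ p, f' p = i := by
      have : i ∈ Set.range f' := ((insert i I).range_orderEmbOfFin hcard) ▸
        (by exact_mod_cast Finset.mem_insert_self i I)
      exact this
    have hcomp : (fun x : Fin m => f' (p.succAbove x)) = g := by
      rw [hg]
      apply Finset.orderEmbOfFin_unique
      · intro x
        have hmem : f' (p.succAbove x) ∈ insert i I :=
          (insert i I).orderEmbOfFin_mem hcard _
        have hne : f' (p.succAbove x) ≠ i := by
          rw [← hp]
          exact fun h => (p.succAbove_ne x) (f'.injective h)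
        rcases Finset.mem_insert.1 hmem with h | h
        · exact absurd h hne
        · exact h
      · exact f'.strictMono.comp (Fin.strictMono_succAbove p)
    have hepsp : eps i I = (p : ℕ) := by
      have h1 := eps_orderEmbOfFin (insert i I) hcard p
      rw [hp] at h1
      have h2 := eps_insert hiI
      omega
    have hexp := Matrix.det_succ_row (B.submatrix f' id) p
    have hterm : ∀ l : Fin (m + 1),
        ((-1 : ℂ)) ^ ((p : ℕ) + (l : ℕ)) * (B.submatrix f' id) p l *
          ((B.submatrix f' id).submatrix p.succAbove l.succAbove).det
        = (-1 : ℂ) ^ ((p : ℕ) + (l : ℕ)) * B i l * K l := by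
      intro l
      have h1 : (B.submatrix f' id) p l = B i l := by simp [Matrix.submatrix_apply, hp]
      have h2 : (B.submatrix f' id).submatrix p.succAbove l.succAbove
          = B.submatrix g l.succAbove := by
        ext a' b'
        simp [Matrix.submatrix_apply, ← hcomp]
      rw [h1, h2]
    rw [Finset.sum_congr rfl (fun l _ => hterm l)] at hexp
    have hpl : plucker B (insert i I)
        = ∑ l : Fin (m + 1), (-1 : ℂ) ^ ((p : ℕ) + (l : ℕ)) * B i l * K l := by
      rw [plucker_eq B hcard, ← hf', hexp]
    simp only [vvec]
    rw [hepsp, hpl, Finset.mul_sum]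
    apply Finset.sum_congr rfl
    intro l _
    have h4 := neg_one_pow_mul_self (p : ℕ)
    rw [pow_add]
    calc (-1 : ℂ) ^ (p : ℕ) * ((-1 : ℂ) ^ (p : ℕ) * (-1 : ℂ) ^ (l : ℕ) * B i l * K l)
        = ((-1 : ℂ) ^ (p : ℕ) * (-1 : ℂ) ^ (p : ℕ)) * (B i l * ((-1 : ℂ) ^ (l : ℕ) * K l)) := by
          ring
      _ = B i l * ((-1 : ℂ) ^ (l : ℕ) * K l) := by rw [h4, one_mul]

lemma mulVec_mem_span {d e : ℕ} (B : Matrix (Fin d) (Fin e) ℂ) (w : Fin e → ℂ) :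
    B.mulVec w ∈ Submodule.span ℂ (Set.range fun l => fun i => B i l) := by
  have : B.mulVec w = ∑ l, w l • (fun i => B i l) := by
    funext i
    simp [Matrix.mulVec, dotProduct, Finset.sum_apply, mul_comm]
  rw [this]
  exact Submodule.sum_mem _ fun l _ => Submodule.smul_mem _ _ (Submodule.subset_span ⟨l, rfl⟩)

lemma sum_orderEmbOfFin {d m : ℕ} (J : Finset (Fin d)) (hJ : J.card = m) (F : Fin d → ℂ) :
    ∑ j ∈ J, F j = ∑ k : Fin m, F (J.orderEmbOfFin hJ k) := by
  classical
  have hJ' : J = Finset.univ.image (J.orderEmbOfFin hJ) := by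
    ext j
    simp only [Finset.mem_image, Finset.mem_univ, true_and]
    constructor
    · intro hj
      have : j ∈ Set.range (J.orderEmbOfFin hJ) := (J.range_orderEmbOfFin hJ) ▸
        (by exact_mod_cast hj)
      obtain ⟨k, hk⟩ := this
      exact ⟨k, hk⟩
    · rintro ⟨k, rfl⟩
      exact J.orderEmbOfFin_mem hJ k
  calc ∑ j ∈ J, F j = ∑ j ∈ Finset.univ.image (J.orderEmbOfFin hJ), F j :=
        Finset.sum_congr hJ' fun _ _ => rfl
    _ = ∑ k : Fin m, F (J.orderEmbOfFin hJ k) :=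
        Finset.sum_image fun a _ b _ h => (J.orderEmbOfFin hJ).injective h

lemma mem_span_of_minors {d e : ℕ} (B : Matrix (Fin d) (Fin e) ℂ)
    (hB : LinearIndependent ℂ (fun l => fun i => B i l)) (x : Fin d → ℂ)
    (hx : ∀ J : Finset (Fin d), J.card = e + 1 →
      ∑ j ∈ J, (-1 : ℂ) ^ (eps j J) * x j * plucker B (J.erase j) = 0) :
    x ∈ Submodule.span ℂ (Set.range fun l => fun i => B i l) := by
  classical
  by_contra hmem
  set C : Matrix (Fin d) (Fin (e + 1)) ℂ := fun i => Fin.snoc (fun l => B i l) (x i) with hC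
  have hcols : (fun l => fun i => C i l) = Fin.snoc (fun l => fun i => B i l) x := by
    funext l
    refine Fin.lastCases ?_ (fun l' => ?_) l
    · funext i; simp [hC]
    · funext i; simp [hC]
  have hind : LinearIndependent ℂ (fun l => fun i => C i l) := by
    rw [hcols]
    exact linearIndependent_fin_snoc.2 ⟨hB, hmem⟩
  obtain ⟨J, hJcard, hJne⟩ := exists_plucker_ne_zero C hind
  apply hJne
  set f := J.orderEmbOfFin hJcard with hf
  have herase : ∀ k : Fin (e + 1), (J.erase (f k)).card = e := by
    intro k
    rw [Finset.card_erase_of_mem (J.orderEmbOfFin_mem hJcard k), hJcard]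
    rfl
  rw [plucker_eq C hJcard, Matrix.det_succ_column (C.submatrix f id) (Fin.last e)]
  have hterm : ∀ k : Fin (e + 1),
      (-1 : ℂ) ^ ((k : ℕ) + ((Fin.last e) : ℕ)) * (C.submatrix f id) k (Fin.last e) *
        ((C.submatrix f id).submatrix k.succAbove (Fin.last e).succAbove).det
      = (-1 : ℂ) ^ ((k : ℕ) + e) * x (f k) * plucker B (J.erase (f k)) := by
    intro k
    have h1 : (C.submatrix f id) k (Fin.last e) = x (f k) := by rw [Matrix.submatrix_apply]; simp [hC, Fin.snoc_last]
    have h2 : ((C.submatrix f id).submatrix k.succAbove (Fin.last e).succAbove)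
        = B.submatrix ((J.erase (f k)).orderEmbOfFin (herase k)) id := by
      ext a b
      rw [Matrix.submatrix_apply, Matrix.submatrix_apply, Matrix.submatrix_apply,
        orderEmbOfFin_erase J hJcard k (herase k) a]
      simp [hC, Fin.succAbove_last, Fin.snoc_castSucc, hf]
    rw [h1, h2, ← plucker_eq B (herase k), Fin.val_last]
  rw [Finset.sum_congr rfl fun k _ => hterm k]
  have h0 := hx J hJcard
  rw [sum_orderEmbOfFin J hJcard] at h0
  have h3 : ∀ k : Fin (e + 1),
      (-1 : ℂ) ^ ((k : ℕ) + e) * x (f k) * plucker B (J.erase (f k))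
      = (-1 : ℂ) ^ (e + 1) *
        ((-1 : ℂ) ^ (eps (f k) J) * x (f k) * plucker B (J.erase (f k))) := by
    intro k
    rw [eps_orderEmbOfFin J hJcard k, pow_add, pow_add, pow_add]
    ring
  rw [Finset.sum_congr rfl fun k _ => h3 k, ← Finset.mul_sum, h0, mul_zero]

/-- The columns of `B` form a basis of the subspace `N` of `ℂ^d`. -/
def IsColBasis {d e : ℕ} (B : Matrix (Fin d) (Fin e) ℂ) (N : Submodule ℂ (Fin d → ℂ)) : Prop :=
  LinearIndependent ℂ (fun l => fun i => B i l) ∧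
    Submodule.span ℂ (Set.range fun l => fun i => B i l) = N

noncomputable def qpr {dp dq ep eq : ℕ} (A : Matrix (Fin dq) (Fin dp) ℂ)
    (Bp : Matrix (Fin dp) (Fin ep) ℂ) (Bq : Matrix (Fin dq) (Fin eq) ℂ)
    (I : Finset (Fin dp)) (J : Finset (Fin dq)) : ℂ :=
  ∑ i ∈ Iᶜ, ∑ j ∈ J,
    (-1 : ℂ) ^ (eps i I + eps j J) * A j i * plucker Bp (insert i I) * plucker Bq (J.erase j)

theorem stmt2 {dp dq ep eq : ℕ}
    (Np : Submodule ℂ (Fin dp → ℂ)) (Nq : Submodule ℂ (Fin dq → ℂ))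
    (Bp : Matrix (Fin dp) (Fin ep) ℂ) (Bq : Matrix (Fin dq) (Fin eq) ℂ)
    (hBp : IsColBasis Bp Np) (hBq : IsColBasis Bq Nq)
    (A : Matrix (Fin dq) (Fin dp) ℂ)
    (hqpr : ∀ I : Finset (Fin dp), I.card + 1 = ep →
      ∀ J : Finset (Fin dq), J.card = eq + 1 → qpr A Bp Bq I J = 0) :
    ∀ x ∈ Np, A.mulVec x ∈ Nq := by
  classical
  obtain ⟨hBpInd, hBpSpan⟩ := hBp
  obtain ⟨hBqInd, hBqSpan⟩ := hBq
  -- Step 1: the image of each generating vector `vvec Bp I` lies in `Nq`.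
  have key : ∀ I : Finset (Fin dp), I.card + 1 = ep → A.mulVec (vvec Bp I) ∈ Nq := by
    intro I hIcard
    rw [← hBqSpan]
    apply mem_span_of_minors Bq hBqInd
    intro J hJ
    have h0 := hqpr I hIcard J hJ
    rw [qpr] at h0
    have hstep : ∀ j : Fin dq,
        (-1 : ℂ) ^ (eps j J) * (A.mulVec (vvec Bp I)) j * plucker Bq (J.erase j)
        = ∑ i ∈ Iᶜ, (-1 : ℂ) ^ (eps i I + eps j J) * A j i * plucker Bp (insert i I) *
            plucker Bq (J.erase j) := by
      intro j
      have hmv : (A.mulVec (vvec Bp I)) j = ∑ i ∈ Iᶜ, A j i * vvec Bp I i := by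
        have h1 : (A.mulVec (vvec Bp I)) j = ∑ i, A j i * vvec Bp I i := by
          simp [Matrix.mulVec, dotProduct]
        rw [h1]
        refine (Finset.sum_subset (Finset.subset_univ Iᶜ) ?_).symm
        intro i _ hiI
        rw [Finset.mem_compl, not_not] at hiI
        have : vvec Bp I i = 0 := by
          rw [vvec, Finset.insert_eq_self.2 hiI, plucker_eq_zero]
          · ring
          · omega
        rw [this, mul_zero]
      rw [hmv, Finset.mul_sum, Finset.sum_mul]
      apply Finset.sum_congr rfl
      intro i _
      rw [vvec, pow_add]
      ring
    calc ∑ j ∈ J, (-1 : ℂ) ^ (eps j J) * (A.mulVec (vvec Bp I)) j * plucker Bq (J.erase j)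
        = ∑ j ∈ J, ∑ i ∈ Iᶜ, (-1 : ℂ) ^ (eps i I + eps j J) * A j i *
            plucker Bp (insert i I) * plucker Bq (J.erase j) :=
          Finset.sum_congr rfl fun j _ => hstep j
      _ = 0 := by rw [← h0]; exact Finset.sum_comm
  -- Step 2: the vectors `vvec Bp (R.erase _)` span `Np`.
  intro x hx
  cases ep with
  | zero =>
    rw [← hBpSpan] at hx
    have : (Set.range fun (l : Fin 0) => fun i => Bp i l) = ∅ := Set.range_eq_empty _
    rw [this, Submodule.span_empty, Submodule.mem_bot] at hx
    rw [hx, Matrix.mulVec_zero]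
    exact Nq.zero_mem
  | succ m =>
    obtain ⟨R, hRcard, hRne⟩ := exists_plucker_ne_zero Bp hBpInd
    set f := R.orderEmbOfFin hRcard with hf
    have herase : ∀ k : Fin (m + 1), (R.erase (f k)).card = m := by
      intro k
      rw [Finset.card_erase_of_mem (R.orderEmbOfFin_mem hRcard k), hRcard]
      rfl
    set u : Fin (m + 1) → (Fin dp → ℂ) := fun k => vvec Bp (R.erase (f k)) with hu
    have hu_mem : ∀ k, u k ∈ Np := by
      intro k
      rw [← hBpSpan]
      show vvec Bp (R.erase (f k)) ∈ _
      rw [vvec_eq_mulVec Bp _ (herase k)]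
      exact mulVec_mem_span _ _
    have hu_ind : LinearIndependent ℂ u := by
      rw [Fintype.linearIndependent_iff]
      intro g hg k₀
      have h1 := congrFun hg (f k₀)
      rw [Finset.sum_apply] at h1
      simp only [Pi.smul_apply, smul_eq_mul, Pi.zero_apply] at h1
      rw [Finset.sum_eq_single k₀] at h1
      · have huk : u k₀ (f k₀) = (-1 : ℂ) ^ (eps (f k₀) (R.erase (f k₀))) * plucker Bp R := by
          rw [hu]
          simp only [vvec]
          rw [Finset.insert_erase (R.orderEmbOfFin_mem hRcard k₀)]
        rw [huk] at h1
        rcases mul_eq_zero.1 h1 with h | h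
        · exact h
        · exact absurd h (by
            intro h'
            rcases mul_eq_zero.1 h' with h'' | h''
            · exact pow_ne_zero _ (by norm_num) h''
            · exact hRne h'')
      · intro k _ hk
        have : u k (f k₀) = 0 := by
          rw [hu]
          simp only [vvec]
          have hmem : f k₀ ∈ R.erase (f k) :=
            Finset.mem_erase.2 ⟨fun h => hk (f.injective h.symm), R.orderEmbOfFin_mem hRcard k₀⟩
          rw [Finset.insert_eq_self.2 hmem, plucker_eq_zero, mul_zero]
          rw [herase k]
          omega
        rw [this, mul_zero]
      · intro h
        exact absurd (Finset.mem_univ k₀) h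
    have hW : Submodule.span ℂ (Set.range u) = Np := by
      apply Submodule.eq_of_le_of_finrank_le
      · rw [Submodule.span_le, Set.range_subset_iff]
        exact fun k => hu_mem k
      · rw [finrank_span_eq_card hu_ind, ← hBpSpan, finrank_span_eq_card hBpInd]
    rw [← hW, Submodule.mem_span_range_iff_exists_fun] at hx
    obtain ⟨c, hc⟩ := hx
    rw [← hc, ← Matrix.mulVecLin_apply, map_sum]
    apply Submodule.sum_mem
    intro k _
    rw [_root_.map_smul]
    apply Submodule.smul_mem
    rw [Matrix.mulVecLin_apply]
    exact key (R.erase (f k)) (by rw [herase k])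
end

section
/- Let $N_p, N_q, N_r$ be subspaces of $\mathbb{C}^{d_p}, \mathbb{C}^{d_q}, \mathbb{C}^{d_r}$ with Plücker coordinates, and let $A_1: \mathbb{C}^{d_p} \to \mathbb{C}^{d_q}$, $A_2: \mathbb{C}^{d_q} \to \mathbb{C}^{d_r}$ be linear maps with $A_1(N_p) \subseteq N_q$ and $A_2(N_q) \subseteq N_r$. Then the Plücker coordinates of $N_p$ and $N_r$ satisfy the second-order quiver Plücker relations for the composite matrix $A_2 A_1 = (m_{j,i})$: for all $I \subseteq \{1,\dots,d_p\}$ with $|I| = \dim N_p - 1$ and $J \subseteq \{1,\dots,d_r\}$ with $|J| = \dim N_r + 1$, $\sum_{i \notin I, j \in J} (-1)^{\epsilon(i,I)+\epsilon(j,J)} m_{j,i} \Delta_{I\cup\{i\}}(N_p) \Delta_{J\setminus\{j\}}(N_r) = 0$. -/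
open Matrix Finset

/-- The `k`-th element of the sorted enumeration of `s` has exactly `k+1` elements of `s`
below-or-equal to it. -/
lemma eps_orderEmbOfFin_s5 {d n : ℕ} (s : Finset (Fin d)) (h : s.card = n) (k : Fin n) :
    eps (s.orderEmbOfFin h k) s = (k : ℕ) + 1 := by
  have hfilter : s.filter (fun i' => i' ≤ s.orderEmbOfFin h k) =
      (Finset.Iic k).image (s.orderEmbOfFin h) := by
    ext a
    simp only [Finset.mem_filter, Finset.mem_image, Finset.mem_Iic]
    constructor
    · rintro ⟨has, hle⟩
      have : a ∈ Set.range (s.orderEmbOfFin h) := by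
        rw [Finset.range_orderEmbOfFin]; exact has
      obtain ⟨m, rfl⟩ := Set.mem_range.mp this
      exact ⟨m, (s.orderEmbOfFin h).strictMono.le_iff_le.mp hle, rfl⟩
    · rintro ⟨m, hm, rfl⟩
      exact ⟨Finset.orderEmbOfFin_mem s h m, (s.orderEmbOfFin h).monotone hm⟩
  unfold eps
  rw [hfilter, Finset.card_image_of_injective _ (s.orderEmbOfFin h).injective, Fin.card_Iic]

/-- Removing the `k`-th element of the sorted enumeration of `s` gives the sorted
enumeration of `s.erase (the k-th element)`. -/
lemma orderEmbOfFin_succAbove {d n : ℕ} (s : Finset (Fin d)) (h : s.card = n + 1)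
    (k : Fin (n + 1)) (h' : (s.erase (s.orderEmbOfFin h k)).card = n) :
    (fun m => s.orderEmbOfFin h (k.succAbove m)) =
      ⇑((s.erase (s.orderEmbOfFin h k)).orderEmbOfFin h') :=
  Finset.orderEmbOfFin_unique h'
    (fun m => Finset.mem_erase.mpr
      ⟨(s.orderEmbOfFin h).injective.ne (Fin.succAbove_ne k m), Finset.orderEmbOfFin_mem s h _⟩)
    ((s.orderEmbOfFin h).strictMono.comp (Fin.strictMono_succAbove k))

/-- Laplace expansion of the Plücker coordinate of `insert i I` along the row `i`,
with the sign `(-1)^(eps i I)` absorbed. The right-hand side shows that the vector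
`i ↦ (-1)^(eps i I) * Δ_{I ∪ {i}}` lies in the column span of `B`. -/
lemma plucker_insert_eq {d n : ℕ} (B : Matrix (Fin d) (Fin (n + 1)) ℂ) (I : Finset (Fin d))
    (hI : I.card = n) (i : Fin d) :
    (-1 : ℂ) ^ (eps i I) * plucker B (insert i I) =
      ∑ l : Fin (n + 1), B i l *
        ((-1 : ℂ) ^ (l : ℕ) * (B.submatrix (I.orderEmbOfFin hI) l.succAbove).det) := by
  have hRHS : ∑ l : Fin (n + 1), B i l *
        ((-1 : ℂ) ^ (l : ℕ) * (B.submatrix (I.orderEmbOfFin hI) l.succAbove).det)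
      = (B.submatrix (Fin.cons i ⇑(I.orderEmbOfFin hI)) id).det := by
    rw [Matrix.det_succ_row_zero]
    refine Finset.sum_congr rfl fun l _ => ?_
    rw [Matrix.submatrix_apply, Fin.cons_zero, Matrix.submatrix_submatrix]
    have hc : (Fin.cons i ⇑(I.orderEmbOfFin hI)) ∘ Fin.succ = ⇑(I.orderEmbOfFin hI) :=
      funext fun m => Fin.cons_succ _ _ _
    rw [hc, Function.id_comp]
    simp only [id_eq]
    ring
  by_cases hi : i ∈ I
  · rw [Finset.insert_eq_self.mpr hi]
    have h0 : plucker B I = 0 := by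
      unfold plucker
      rw [dif_neg (by omega)]
    rw [h0, mul_zero, hRHS]
    obtain ⟨m, hm⟩ : ∃ m, I.orderEmbOfFin hI m = i := by
      have : i ∈ Set.range (I.orderEmbOfFin hI) := by
        rw [Finset.range_orderEmbOfFin]; exact hi
      exact Set.mem_range.mp this
    symm
    apply Matrix.det_zero_of_row_eq (M := B.submatrix (Fin.cons i ⇑(I.orderEmbOfFin hI)) id)
      (i := 0) (j := m.succ) (Fin.succ_ne_zero m).symm
    funext l
    simp [Matrix.submatrix_apply, Fin.cons_zero, Fin.cons_succ, hm]
  · have hK : (insert i I).card = n + 1 := by rw [Finset.card_insert_of_notMem hi, hI]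
    obtain ⟨k, hk⟩ : ∃ k, (insert i I).orderEmbOfFin hK k = i := by
      have : i ∈ Set.range ((insert i I).orderEmbOfFin hK) := by
        rw [Finset.range_orderEmbOfFin]; exact Finset.mem_insert_self i I
      exact Set.mem_range.mp this
    have hsub : ∀ m : Fin n, (insert i I).orderEmbOfFin hK (k.succAbove m) =
        I.orderEmbOfFin hI m := by
      intro m
      have := Finset.orderEmbOfFin_unique (s := I) (f := fun m => (insert i I).orderEmbOfFin hK
          (k.succAbove m)) hI
        (fun m => by
          have hmem := Finset.orderEmbOfFin_mem (insert i I) hK (k.succAbove m)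
          have hne : (insert i I).orderEmbOfFin hK (k.succAbove m) ≠ i := fun h =>
            Fin.succAbove_ne k m (((insert i I).orderEmbOfFin hK).injective (by rw [hk]; exact h))
          rcases Finset.mem_insert.mp hmem with h | h
          · exact absurd h hne
          · exact h)
        (((insert i I).orderEmbOfFin hK).strictMono.comp (Fin.strictMono_succAbove k))
      exact congrFun this m
    have heps : eps i I = (k : ℕ) := by
      have h1 : eps i (insert i I) = (k : ℕ) + 1 := by
        have := eps_orderEmbOfFin_s5 (insert i I) hK k
        rwa [hk] at this
      have h2 : eps i (insert i I) = eps i I + 1 := by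
        unfold eps
        rw [Finset.filter_insert, if_pos le_rfl,
          Finset.card_insert_of_notMem (fun h => hi (Finset.mem_of_mem_filter i h))]
      omega
    have hplucker : plucker B (insert i I) =
        (B.submatrix (fun m => (insert i I).orderEmbOfFin hK m) id).det := by
      unfold plucker
      rw [dif_pos hK]
      simp only [Finset.coe_orderIsoOfFin_apply]
    have haux : ∀ (a D : ℂ) (s t u : ℕ), ((-1 : ℂ)) ^ s * (-1) ^ t = (-1) ^ u →
        (-1 : ℂ) ^ s * ((-1) ^ t * a * D) = a * ((-1) ^ u * D) := by
      intro a D s t u h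
      rw [← h]; ring
    rw [heps, hplucker, Matrix.det_succ_row _ k, Finset.mul_sum]
    refine Finset.sum_congr rfl fun l _ => ?_
    simp only [Matrix.submatrix_apply, Matrix.submatrix_submatrix, Function.comp_def,
      id_eq, hk, hsub]
    have hsgn : ((-1 : ℂ)) ^ (k : ℕ) * (-1) ^ ((k : ℕ) + (l : ℕ)) = (-1) ^ (l : ℕ) := by
      rw [← pow_add, show (k : ℕ) + ((k : ℕ) + (l : ℕ)) = 2 * (k : ℕ) + (l : ℕ) by ring,
        pow_add, pow_mul]
      norm_num
    exact haux _ _ _ _ _ hsgn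

/-- The alternating sum `∑_{j ∈ J} (-1)^(eps j J) y_j Δ_{J \ j}` vanishes when `y` is a
column of `B`: it is (up to sign) the determinant of a matrix with a repeated column. -/
lemma plucker_erase_col_zero {d n : ℕ} (B : Matrix (Fin d) (Fin n) ℂ) (J : Finset (Fin d))
    (hJ : J.card = n + 1) (l : Fin n) :
    ∑ j ∈ J, (-1 : ℂ) ^ (eps j J) * B j l * plucker B (J.erase j) = 0 := by
  set g := J.orderEmbOfFin hJ with hg
  have himg : J = Finset.image g Finset.univ := by
    ext a
    simp only [Finset.mem_image, Finset.mem_univ, true_and]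
    constructor
    · intro ha
      have : a ∈ Set.range g := by rw [hg, Finset.range_orderEmbOfFin]; exact ha
      exact Set.mem_range.mp this
    · rintro ⟨k, rfl⟩; exact Finset.orderEmbOfFin_mem J hJ k
  have h1 : ∑ j ∈ J, (-1 : ℂ) ^ (eps j J) * B j l * plucker B (J.erase j)
      = ∑ k : Fin (n + 1), (-1 : ℂ) ^ (eps (g k) J) * B (g k) l * plucker B (J.erase (g k)) := by
    rw [Finset.sum_congr himg (fun _ _ => rfl),
      Finset.sum_image (fun a _ b _ h => g.injective h)]
  have hpl : ∀ k : Fin (n + 1), plucker B (J.erase (g k)) =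
      (B.submatrix (fun m => g (k.succAbove m)) id).det := by
    intro k
    have h' : (J.erase (g k)).card = n := by
      rw [Finset.card_erase_of_mem (Finset.orderEmbOfFin_mem J hJ k), hJ]
      omega
    unfold plucker
    rw [dif_pos h']
    simp only [Finset.coe_orderIsoOfFin_apply]
    rw [← orderEmbOfFin_succAbove J hJ k h']
  -- the auxiliary matrix with the repeated column
  set N : Matrix (Fin (n + 1)) (Fin (n + 1)) ℂ :=
    Matrix.of (fun k => Fin.cons (B (g k) l) (fun m => B (g k) m)) with hN
  have hN0 : N.det = 0 := by
    apply Matrix.det_zero_of_column_eq (i := 0) (j := l.succ) (Fin.succ_ne_zero l).symm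
    intro k
    simp [hN, Fin.cons_zero, Fin.cons_succ]
  have hexp : N.det = ∑ k : Fin (n + 1), (-1 : ℂ) ^ (k : ℕ) * B (g k) l *
      (B.submatrix (fun m => g (k.succAbove m)) id).det := by
    rw [Matrix.det_succ_column_zero]
    refine Finset.sum_congr rfl fun k _ => ?_
    have hM : N.submatrix k.succAbove Fin.succ = B.submatrix (fun m => g (k.succAbove m)) id := by
      ext a b
      simp [hN, Fin.cons_succ]
    rw [hM]
    simp [hN, Fin.cons_zero]
  rw [h1]
  have : ∀ k : Fin (n + 1), (-1 : ℂ) ^ (eps (g k) J) * B (g k) l * plucker B (J.erase (g k))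
      = -((-1 : ℂ) ^ (k : ℕ) * B (g k) l * (B.submatrix (fun m => g (k.succAbove m)) id).det) := by
    intro k
    rw [hpl k, eps_orderEmbOfFin_s5 J hJ k, pow_succ]
    ring
  rw [Finset.sum_congr rfl (fun k _ => this k), Finset.sum_neg_distrib, ← hexp, hN0, neg_zero]

theorem stmt5 {dp dq dr ep eq er : ℕ}
    (Np : Submodule ℂ (Fin dp → ℂ)) (Nq : Submodule ℂ (Fin dq → ℂ))
    (Nr : Submodule ℂ (Fin dr → ℂ))
    (Bp : Matrix (Fin dp) (Fin ep) ℂ) (Bq : Matrix (Fin dq) (Fin eq) ℂ)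
    (Br : Matrix (Fin dr) (Fin er) ℂ)
    (hBp : IsColBasis Bp Np) (hBq : IsColBasis Bq Nq) (hBr : IsColBasis Br Nr)
    (A₁ : Matrix (Fin dq) (Fin dp) ℂ) (A₂ : Matrix (Fin dr) (Fin dq) ℂ)
    (hA₁ : ∀ x ∈ Np, A₁.mulVec x ∈ Nq) (hA₂ : ∀ x ∈ Nq, A₂.mulVec x ∈ Nr)
    (I : Finset (Fin dp)) (hI : I.card + 1 = ep)
    (J : Finset (Fin dr)) (hJ : J.card = er + 1) :
    qpr (A₂ * A₁) Bp Br I J = 0 := by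
  subst hI
  classical
  set A : Matrix (Fin dr) (Fin dp) ℂ := A₂ * A₁ with hA
  set c : Fin (I.card + 1) → ℂ := fun l =>
    (-1 : ℂ) ^ (l : ℕ) * (Bp.submatrix (I.orderEmbOfFin rfl) l.succAbove).det with hc
  have hins : ∀ i : Fin dp, (-1 : ℂ) ^ (eps i I) * plucker Bp (insert i I)
      = ∑ l, Bp i l * c l := fun i => plucker_insert_eq Bp I rfl i
  -- the linear functional vanishing on Nr
  have hT : ∀ y ∈ Nr, ∑ j ∈ J, (-1 : ℂ) ^ (eps j J) * y j * plucker Br (J.erase j) = 0 := by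
    intro y hy
    let T : (Fin dr → ℂ) →ₗ[ℂ] ℂ :=
      { toFun := fun y => ∑ j ∈ J, (-1 : ℂ) ^ (eps j J) * y j * plucker Br (J.erase j)
        map_add' := fun y z => by
          simp only [Pi.add_apply]
          rw [← Finset.sum_add_distrib]
          exact Finset.sum_congr rfl fun j _ => by ring
        map_smul' := fun a y => by
          simp only [Pi.smul_apply, smul_eq_mul, RingHom.id_apply]
          rw [Finset.mul_sum]
          exact Finset.sum_congr rfl fun j _ => by ring }
    have hle : Nr ≤ LinearMap.ker T := by
      rw [← hBr.2, Submodule.span_le]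
      rintro _ ⟨l, rfl⟩
      exact LinearMap.mem_ker.mpr (plucker_erase_col_zero Br J hJ l)
    exact hle hy
  have hcol : ∀ l : Fin (I.card + 1), (fun j => (A * Bp) j l) ∈ Nr := by
    intro l
    have h1 : (fun i => Bp i l) ∈ Np := by
      rw [← hBp.2]; exact Submodule.subset_span ⟨l, rfl⟩
    have h2 := hA₂ _ (hA₁ _ h1)
    have h3 : (fun j => (A * Bp) j l) = A₂.mulVec (A₁.mulVec (fun i => Bp i l)) := by
      funext j
      rw [Matrix.mulVec_mulVec, hA]
      simp [Matrix.mulVec, Matrix.mul_apply, dotProduct]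
    rw [h3]; exact h2
  have key : ∀ j, ∑ i : Fin dp, A j i * ((-1 : ℂ) ^ (eps i I) * plucker Bp (insert i I))
      = ∑ l, (A * Bp) j l * c l := by
    intro j
    calc ∑ i : Fin dp, A j i * ((-1 : ℂ) ^ (eps i I) * plucker Bp (insert i I))
        = ∑ i : Fin dp, A j i * ∑ l, Bp i l * c l :=
          Finset.sum_congr rfl fun i _ => by rw [hins i]
      _ = ∑ l, (∑ i : Fin dp, A j i * Bp i l) * c l := by
          simp_rw [Finset.mul_sum, Finset.sum_mul]
          rw [Finset.sum_comm]
          exact Finset.sum_congr rfl fun l _ => Finset.sum_congr rfl fun i _ => by ring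
      _ = ∑ l, (A * Bp) j l * c l :=
          Finset.sum_congr rfl fun l _ => by rw [Matrix.mul_apply]
  unfold qpr
  have step1 : ∑ i ∈ Iᶜ, ∑ j ∈ J, (-1 : ℂ) ^ (eps i I + eps j J) * A j i *
        plucker Bp (insert i I) * plucker Br (J.erase j)
      = ∑ i : Fin dp, ∑ j ∈ J, (-1 : ℂ) ^ (eps i I + eps j J) * A j i *
        plucker Bp (insert i I) * plucker Br (J.erase j) := by
    apply Finset.sum_subset (Finset.subset_univ Iᶜ)
    intro i _ hi
    have hiI : i ∈ I := by simpa using hi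
    have h0 : plucker Bp (insert i I) = 0 := by
      rw [Finset.insert_eq_self.mpr hiI]
      unfold plucker
      rw [dif_neg (by omega)]
    exact Finset.sum_eq_zero fun j _ => by rw [h0]; ring
  rw [step1, Finset.sum_comm]
  have step2 : ∀ j ∈ J, ∑ i : Fin dp, (-1 : ℂ) ^ (eps i I + eps j J) * A j i *
        plucker Bp (insert i I) * plucker Br (J.erase j)
      = ∑ l, c l * ((-1 : ℂ) ^ (eps j J) * (A * Bp) j l * plucker Br (J.erase j)) := by
    intro j _
    have h4 : ∑ i : Fin dp, (-1 : ℂ) ^ (eps i I + eps j J) * A j i *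
          plucker Bp (insert i I) * plucker Br (J.erase j)
        = ((-1 : ℂ) ^ (eps j J) * plucker Br (J.erase j)) *
          ∑ i : Fin dp, A j i * ((-1 : ℂ) ^ (eps i I) * plucker Bp (insert i I)) := by
      rw [Finset.mul_sum]
      exact Finset.sum_congr rfl fun i _ => by rw [pow_add]; ring
    rw [h4, key j, Finset.mul_sum]
    exact Finset.sum_congr rfl fun l _ => by ring
  rw [Finset.sum_congr rfl step2, Finset.sum_comm]
  apply Finset.sum_eq_zero
  intro l _
  rw [← Finset.mul_sum]
  have h0 : ∑ j ∈ J, (-1 : ℂ) ^ (eps j J) * (A * Bp) j l * plucker Br (J.erase j) = 0 := by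
    simpa using hT (fun j => (A * Bp) j l) (hcol l)
  rw [h0, mul_zero]
end
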